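/- For ℓ = 3, the polytope P̃^3 = conv({0} ∪ {e_i - 2 e_j : i ≠ j ∈ {1,2,3}}) ⊂ ℝ^3 has normalized volume 3! · Vol(P̃^3) = 13 = D_2. -/

import Mathlib

open MeasureTheory Set

noncomputable section



/-- linear functional with coefficient vector `c` -/
def NV.lf (c : Fin 3 → ℝ) : (Fin 3 → ℝ) →ₗ[ℝ] ℝ where
  toFun x := c 0 * x 0 + c 1 * x 1 + c 2 * x 2
  map_add' x y := by simp; ring
  map_smul' r x := by simp; ring

lemma NV.lf_apply (c x : Fin 3 → ℝ) : NV.lf c x = c 0 * x 0 + c 1 * x 1 + c 2 * x 2 := rfl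

lemma NV.null_of_linear (f : (Fin 3 → ℝ) →ₗ[ℝ] ℝ) (hf : f ≠ 0) :
    volume {x | f x = 0} = 0 := by
  have h1 : {x | f x = 0} = (LinearMap.ker f : Set (Fin 3 → ℝ)) := rfl
  rw [h1]
  exact Measure.addHaar_submodule _ _ (by simpa [LinearMap.ker_eq_top] using hf)

lemma NV.vol_union_null {A B : Set (Fin 3 → ℝ)} (hB : MeasurableSet B)
    (h0 : volume (A ∩ B) = 0) :
    volume (A ∪ B) = volume A + volume B := by
  have h := measure_union_add_inter (μ := volume) A hB
  rw [h0, add_zero] at h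
  exact h

lemma NV.vol_image_eq (M : Matrix (Fin 3) (Fin 3) ℝ) (S T : Set (Fin 3 → ℝ))
    (hdet : |M.det| = 1) (h : Matrix.toLin' M '' S = T) : volume T = volume S := by
  rw [← h, Measure.addHaar_image_linearMap, LinearMap.det_toLin', hdet]
  simp

lemma NV.null_coord_pair {A B : Set (Fin 3 → ℝ)} (i j : Fin 3) (hij : i ≠ j)
    (h : A ∩ B ⊆ {y | y i = y j}) : volume (A ∩ B) = 0 := by
  refine measure_mono_null ?_ (NV.null_of_linear ((LinearMap.proj i : (Fin 3 → ℝ) →ₗ[ℝ] ℝ) - (LinearMap.proj j : (Fin 3 → ℝ) →ₗ[ℝ] ℝ)) ?_)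
  · intro y hy
    have := h hy
    simp [this, sub_eq_zero]
  · intro hcon
    have := LinearMap.congr_fun hcon (Pi.single i 1)
    simp [Pi.single_apply, hij, (by simpa using hij.symm : j ≠ i)] at this




lemma NV.comb3_mem {S : Set (Fin 3 → ℝ)} (hS : Convex ℝ S) {z p r : Fin 3 → ℝ}
    (hz : z ∈ S) (hp : p ∈ S) (hr : r ∈ S) {c1 c2 c3 : ℝ}
    (h1 : 0 ≤ c1) (h2 : 0 ≤ c2) (h3 : 0 ≤ c3) (hsum : c1 + c2 + c3 = 1) :
    c1 • z + c2 • p + c3 • r ∈ S := by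
  have h := hS.sum_mem (t := Finset.univ) (w := ![c1,c2,c3]) (z := ![z,p,r])
    (fun i _ => by fin_cases i <;> simpa) (by simp [Fin.sum_univ_three, hsum])
    (fun i _ => by fin_cases i <;> simpa)
  simpa [Fin.sum_univ_three] using h

/-- Splitting a convex hull along a "diagonal": if all the crossing combinations of points
of `P` and `N` (with fixed weights) lie in `convexHull Z`, the hull of `Z ∪ P ∪ N` splits. -/
lemma NV.hull_split (Z P N : Set (Fin 3 → ℝ)) (a b : ℝ) (ha : 0 < a) (hb : 0 < b)
    (hZne : Z.Nonempty) (hPne : P.Nonempty) (hNne : N.Nonempty)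
    (hcross : ∀ p ∈ P, ∀ n ∈ N, (b/(a+b)) • p + (a/(a+b)) • n ∈ convexHull ℝ Z) :
    convexHull ℝ (Z ∪ P ∪ N) = convexHull ℝ (Z ∪ P) ∪ convexHull ℝ (Z ∪ N) := by
  have hab : 0 < a + b := by linarith
  -- extend the crossing condition to the hulls
  have hcross1 : ∀ p ∈ P, ∀ n ∈ convexHull ℝ N,
      (b/(a+b)) • p + (a/(a+b)) • n ∈ convexHull ℝ Z := by
    intro p hp
    have hconv : Convex ℝ {n | (b/(a+b)) • p + (a/(a+b)) • n ∈ convexHull ℝ Z} := by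
      intro n1 h1 n2 h2 s t hs ht hst
      obtain rfl : t = 1 - s := by linarith
      have heq : (b/(a+b)) • p + (a/(a+b)) • (s • n1 + (1-s) • n2)
          = s • ((b/(a+b)) • p + (a/(a+b)) • n1)
            + (1-s) • ((b/(a+b)) • p + (a/(a+b)) • n2) := by module
      simp only [mem_setOf_eq] at h1 h2 ⊢
      rw [heq]
      exact (convex_convexHull ℝ Z) h1 h2 hs (by linarith) (by ring)
    exact fun n hn => convexHull_min (fun n' hn' => hcross p hp n' hn') hconv hn
  have hcross2 : ∀ p ∈ convexHull ℝ P, ∀ n ∈ convexHull ℝ N,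
      (b/(a+b)) • p + (a/(a+b)) • n ∈ convexHull ℝ Z := by
    intro p hp n hn
    have hconv : Convex ℝ {p' | (b/(a+b)) • p' + (a/(a+b)) • n ∈ convexHull ℝ Z} := by
      intro p1 h1 p2 h2 s t hs ht hst
      obtain rfl : t = 1 - s := by linarith
      have heq : (b/(a+b)) • (s • p1 + (1-s) • p2) + (a/(a+b)) • n
          = s • ((b/(a+b)) • p1 + (a/(a+b)) • n)
            + (1-s) • ((b/(a+b)) • p2 + (a/(a+b)) • n) := by module
      simp only [mem_setOf_eq] at h1 h2 ⊢
      rw [heq]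
      exact (convex_convexHull ℝ Z) h1 h2 hs (by linarith) (by ring)
    exact convexHull_min (fun p' hp' => hcross1 p' hp' n hn) hconv hp
  apply Subset.antisymm
  · rw [convexHull_union (hZne.mono subset_union_left) hNne]
    intro x hx
    rw [mem_convexJoin] at hx
    obtain ⟨u, hu, n, hn, hx⟩ := hx
    rw [convexHull_union hZne hPne, mem_convexJoin] at hu
    obtain ⟨z, hz, p, hp, hu⟩ := hu
    obtain ⟨s, t, hs, ht, hst, rfl⟩ := hu
    obtain ⟨θ, τ, hθ, hτ, hθτ, rfl⟩ := hx
    have hr : (b/(a+b)) • p + (a/(a+b)) • n ∈ convexHull ℝ Z := hcross2 p hp n hn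
    have hsum : θ*s + θ*t + τ = 1 := by linear_combination θ * hst + hθτ
    have hzZP : z ∈ convexHull ℝ (Z ∪ P) := convexHull_mono subset_union_left hz
    have hpZP : p ∈ convexHull ℝ (Z ∪ P) := convexHull_mono subset_union_right hp
    have hrZP : (b/(a+b)) • p + (a/(a+b)) • n ∈ convexHull ℝ (Z ∪ P) :=
      convexHull_mono subset_union_left hr
    have hzZN : z ∈ convexHull ℝ (Z ∪ N) := convexHull_mono subset_union_left hz
    have hnZN : n ∈ convexHull ℝ (Z ∪ N) := convexHull_mono subset_union_right hn
    have hrZN : (b/(a+b)) • p + (a/(a+b)) • n ∈ convexHull ℝ (Z ∪ N) :=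
      convexHull_mono subset_union_left hr
    rcases le_or_gt 0 ((θ*t) * a - τ * b) with hcase | hcase
    · left
      have hxeq : θ • (s • z + t • p) + τ • n
          = (θ*s) • z + (((θ*t)*a - τ*b)/a) • p
            + ((τ*(a+b))/a) • ((b/(a+b)) • p + (a/(a+b)) • n) := by
        match_scalars <;> field_simp <;> ring
      rw [hxeq]
      exact NV.comb3_mem (convex_convexHull ℝ (Z ∪ P)) hzZP hpZP hrZP
        (by positivity) (div_nonneg hcase ha.le) (by positivity)
        (by field_simp; linear_combination a * hsum)
    · right
      have hxeq : θ • (s • z + t • p) + τ • n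
          = (θ*s) • z + (((θ*t)*(a+b))/b) • ((b/(a+b)) • p + (a/(a+b)) • n)
            + ((τ*b - (θ*t)*a)/b) • n := by
        match_scalars <;> field_simp <;> ring
      rw [hxeq]
      exact NV.comb3_mem (convex_convexHull ℝ (Z ∪ N)) hzZN hrZN hnZN
        (by positivity) (by positivity) (div_nonneg (by linarith) hb.le)
        (by field_simp; linear_combination b * hsum)
  · refine union_subset (convexHull_mono ?_) (convexHull_mono ?_) <;> intro x hx <;>
      rcases hx with h | h
    · exact Or.inl (Or.inl h)
    · exact Or.inl (Or.inr h)
    · exact Or.inl (Or.inl h)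
    · exact Or.inr h


def NV.Cs (i j k : Fin 3) : Set (Fin 3 → ℝ) :=
  {y | 0 ≤ y i ∧ y i ≤ y j ∧ y j ≤ y k ∧ y k ≤ 1}

lemma NV.mem_Cs {i j k : Fin 3} {x : Fin 3 → ℝ} :
    x ∈ NV.Cs i j k ↔ (0 ≤ x i ∧ x i ≤ x j ∧ x j ≤ x k ∧ x k ≤ 1) := Iff.rfl

lemma NV.meas_Cs (i j k : Fin 3) : MeasurableSet (NV.Cs i j k) := by
  have h : ∀ l : Fin 3, Measurable fun y : Fin 3 → ℝ => y l := fun l => measurable_pi_apply l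
  have he : NV.Cs i j k
      = {y | 0 ≤ y i} ∩ {y | y i ≤ y j} ∩ {y | y j ≤ y k} ∩ {y : Fin 3 → ℝ | y k ≤ 1} := by
    ext y; simp only [NV.Cs, mem_setOf_eq, mem_inter_iff]; tauto
  rw [he]
  exact (((measurableSet_le measurable_const (h i)).inter (measurableSet_le (h i) (h j))).inter
    (measurableSet_le (h j) (h k))).inter (measurableSet_le (h k) measurable_const)

lemma NV.volCs_021 : volume (NV.Cs 0 2 1) = volume (NV.Cs 0 1 2) := by
  apply NV.vol_image_eq ![![(1:ℝ),0,0],![0,0,1],![0,1,0]]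
  · erw [Matrix.det_fin_three]; simp
  · have hM : ∀ y : Fin 3 → ℝ, Matrix.toLin' ![![(1:ℝ),0,0],![0,0,1],![0,1,0]] y = ![y 0, y 2, y 1] := by
      intro y; funext l; fin_cases l <;>
        erw [Matrix.toLin'_apply] <;> simp [Matrix.toLin'_apply, Matrix.mulVec, dotProduct, Fin.sum_univ_three]
    ext x
    constructor
    · rintro ⟨y, hy, rfl⟩
      rw [hM]
      rw [NV.mem_Cs] at hy ⊢
      obtain ⟨h1, h2, h3, h4⟩ := hy
      exact ⟨by simpa, by simpa, by simpa, by simpa⟩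
    · intro hx
      rw [NV.mem_Cs] at hx
      obtain ⟨h1, h2, h3, h4⟩ := hx
      refine ⟨![x 0, x 2, x 1], ?_, by rw [hM]; funext l; fin_cases l <;> simp⟩
      rw [NV.mem_Cs]
      exact ⟨by simpa, by simpa, by simpa, by simpa⟩

lemma NV.volCs_102 : volume (NV.Cs 1 0 2) = volume (NV.Cs 0 1 2) := by
  apply NV.vol_image_eq ![![(0:ℝ),1,0],![1,0,0],![0,0,1]]
  · erw [Matrix.det_fin_three]; simp
  · have hM : ∀ y : Fin 3 → ℝ, Matrix.toLin' ![![(0:ℝ),1,0],![1,0,0],![0,0,1]] y = ![y 1, y 0, y 2] := by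
      intro y; funext l; fin_cases l <;>
        erw [Matrix.toLin'_apply] <;> simp [Matrix.toLin'_apply, Matrix.mulVec, dotProduct, Fin.sum_univ_three]
    ext x
    constructor
    · rintro ⟨y, hy, rfl⟩
      rw [hM]
      rw [NV.mem_Cs] at hy ⊢
      obtain ⟨h1, h2, h3, h4⟩ := hy
      exact ⟨by simpa, by simpa, by simpa, by simpa⟩
    · intro hx
      rw [NV.mem_Cs] at hx
      obtain ⟨h1, h2, h3, h4⟩ := hx
      refine ⟨![x 1, x 0, x 2], ?_, by rw [hM]; funext l; fin_cases l <;> simp⟩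
      rw [NV.mem_Cs]
      exact ⟨by simpa, by simpa, by simpa, by simpa⟩

lemma NV.volCs_120 : volume (NV.Cs 1 2 0) = volume (NV.Cs 0 1 2) := by
  apply NV.vol_image_eq ![![(0:ℝ),0,1],![1,0,0],![0,1,0]]
  · erw [Matrix.det_fin_three]; simp
  · have hM : ∀ y : Fin 3 → ℝ, Matrix.toLin' ![![(0:ℝ),0,1],![1,0,0],![0,1,0]] y = ![y 2, y 0, y 1] := by
      intro y; funext l; fin_cases l <;>
        erw [Matrix.toLin'_apply] <;> simp [Matrix.toLin'_apply, Matrix.mulVec, dotProduct, Fin.sum_univ_three]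
    ext x
    constructor
    · rintro ⟨y, hy, rfl⟩
      rw [hM]
      rw [NV.mem_Cs] at hy ⊢
      obtain ⟨h1, h2, h3, h4⟩ := hy
      exact ⟨by simpa, by simpa, by simpa, by simpa⟩
    · intro hx
      rw [NV.mem_Cs] at hx
      obtain ⟨h1, h2, h3, h4⟩ := hx
      refine ⟨![x 1, x 2, x 0], ?_, by rw [hM]; funext l; fin_cases l <;> simp⟩
      rw [NV.mem_Cs]
      exact ⟨by simpa, by simpa, by simpa, by simpa⟩

lemma NV.volCs_201 : volume (NV.Cs 2 0 1) = volume (NV.Cs 0 1 2) := by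
  apply NV.vol_image_eq ![![(0:ℝ),1,0],![0,0,1],![1,0,0]]
  · erw [Matrix.det_fin_three]; simp
  · have hM : ∀ y : Fin 3 → ℝ, Matrix.toLin' ![![(0:ℝ),1,0],![0,0,1],![1,0,0]] y = ![y 1, y 2, y 0] := by
      intro y; funext l; fin_cases l <;>
        erw [Matrix.toLin'_apply] <;> simp [Matrix.toLin'_apply, Matrix.mulVec, dotProduct, Fin.sum_univ_three]
    ext x
    constructor
    · rintro ⟨y, hy, rfl⟩
      rw [hM]
      rw [NV.mem_Cs] at hy ⊢
      obtain ⟨h1, h2, h3, h4⟩ := hy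
      exact ⟨by simpa, by simpa, by simpa, by simpa⟩
    · intro hx
      rw [NV.mem_Cs] at hx
      obtain ⟨h1, h2, h3, h4⟩ := hx
      refine ⟨![x 2, x 0, x 1], ?_, by rw [hM]; funext l; fin_cases l <;> simp⟩
      rw [NV.mem_Cs]
      exact ⟨by simpa, by simpa, by simpa, by simpa⟩

lemma NV.volCs_210 : volume (NV.Cs 2 1 0) = volume (NV.Cs 0 1 2) := by
  apply NV.vol_image_eq ![![(0:ℝ),0,1],![0,1,0],![1,0,0]]
  · erw [Matrix.det_fin_three]; simp
  · have hM : ∀ y : Fin 3 → ℝ, Matrix.toLin' ![![(0:ℝ),0,1],![0,1,0],![1,0,0]] y = ![y 2, y 1, y 0] := by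
      intro y; funext l; fin_cases l <;>
        erw [Matrix.toLin'_apply] <;> simp [Matrix.toLin'_apply, Matrix.mulVec, dotProduct, Fin.sum_univ_three]
    ext x
    constructor
    · rintro ⟨y, hy, rfl⟩
      rw [hM]
      rw [NV.mem_Cs] at hy ⊢
      obtain ⟨h1, h2, h3, h4⟩ := hy
      exact ⟨by simpa, by simpa, by simpa, by simpa⟩
    · intro hx
      rw [NV.mem_Cs] at hx
      obtain ⟨h1, h2, h3, h4⟩ := hx
      refine ⟨![x 2, x 1, x 0], ?_, by rw [hM]; funext l; fin_cases l <;> simp⟩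
      rw [NV.mem_Cs]
      exact ⟨by simpa, by simpa, by simpa, by simpa⟩

lemma NV.Cs_null_pair (i1 j1 k1 i2 j2 k2 u v : Fin 3) (huv : u ≠ v)
    (h : ∀ y : Fin 3 → ℝ, y ∈ NV.Cs i1 j1 k1 → y ∈ NV.Cs i2 j2 k2 → y u = y v) :
    volume (NV.Cs i1 j1 k1 ∩ NV.Cs i2 j2 k2) = 0 :=
  NV.null_coord_pair u v huv (fun y hy => h y hy.1 hy.2)

lemma NV.Cs_subset_Icc (i j k : Fin 3) (hcov : ∀ l : Fin 3, l = i ∨ l = j ∨ l = k) :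
    NV.Cs i j k ⊆ Icc (0 : Fin 3 → ℝ) 1 := by
  rintro y ⟨h1, h2, h3, h4⟩
  constructor <;> intro l <;>
    rcases hcov l with rfl | rfl | rfl <;> simp <;> linarith

lemma NV.cover : Icc (0 : Fin 3 → ℝ) 1 ⊆
    NV.Cs 0 1 2 ∪ NV.Cs 0 2 1 ∪ NV.Cs 1 0 2 ∪ NV.Cs 1 2 0 ∪ NV.Cs 2 0 1 ∪ NV.Cs 2 1 0 := by
  rintro y ⟨hy0, hy1⟩
  have a0 : (0:ℝ) ≤ y 0 := hy0 0
  have a1 : (0:ℝ) ≤ y 1 := hy0 1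
  have a2 : (0:ℝ) ≤ y 2 := hy0 2
  have b0 : y 0 ≤ 1 := hy1 0
  have b1 : y 1 ≤ 1 := hy1 1
  have b2 : y 2 ≤ 1 := hy1 2
  simp only [mem_union, NV.mem_Cs]
  rcases le_total (y 0) (y 1) with h01 | h01 <;> rcases le_total (y 1) (y 2) with h12 | h12 <;>
    rcases le_total (y 0) (y 2) with h02 | h02 <;> tauto

lemma NV.vol_C : volume (NV.Cs 0 1 2) = 6⁻¹ := by
  set v := volume (NV.Cs 0 1 2) with hv
  have n01 : volume (NV.Cs 0 1 2 ∩ NV.Cs 0 2 1) = 0 :=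
    NV.Cs_null_pair _ _ _ _ _ _ 1 2 (by decide) (by
      rintro y ⟨c1, c2, c3, c4⟩ ⟨d1, d2, d3, d4⟩
      exact le_antisymm (by linarith) (by linarith))
  have n02 : volume (NV.Cs 0 1 2 ∩ NV.Cs 1 0 2) = 0 :=
    NV.Cs_null_pair _ _ _ _ _ _ 0 1 (by decide) (by
      rintro y ⟨c1, c2, c3, c4⟩ ⟨d1, d2, d3, d4⟩
      exact le_antisymm (by linarith) (by linarith))
  have n03 : volume (NV.Cs 0 1 2 ∩ NV.Cs 1 2 0) = 0 :=
    NV.Cs_null_pair _ _ _ _ _ _ 0 1 (by decide) (by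
      rintro y ⟨c1, c2, c3, c4⟩ ⟨d1, d2, d3, d4⟩
      exact le_antisymm (by linarith) (by linarith))
  have n04 : volume (NV.Cs 0 1 2 ∩ NV.Cs 2 0 1) = 0 :=
    NV.Cs_null_pair _ _ _ _ _ _ 1 2 (by decide) (by
      rintro y ⟨c1, c2, c3, c4⟩ ⟨d1, d2, d3, d4⟩
      exact le_antisymm (by linarith) (by linarith))
  have n05 : volume (NV.Cs 0 1 2 ∩ NV.Cs 2 1 0) = 0 :=
    NV.Cs_null_pair _ _ _ _ _ _ 0 1 (by decide) (by
      rintro y ⟨c1, c2, c3, c4⟩ ⟨d1, d2, d3, d4⟩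
      exact le_antisymm (by linarith) (by linarith))
  have n12 : volume (NV.Cs 0 2 1 ∩ NV.Cs 1 0 2) = 0 :=
    NV.Cs_null_pair _ _ _ _ _ _ 2 1 (by decide) (by
      rintro y ⟨c1, c2, c3, c4⟩ ⟨d1, d2, d3, d4⟩
      exact le_antisymm (by linarith) (by linarith))
  have n13 : volume (NV.Cs 0 2 1 ∩ NV.Cs 1 2 0) = 0 :=
    NV.Cs_null_pair _ _ _ _ _ _ 0 2 (by decide) (by
      rintro y ⟨c1, c2, c3, c4⟩ ⟨d1, d2, d3, d4⟩
      exact le_antisymm (by linarith) (by linarith))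
  have n14 : volume (NV.Cs 0 2 1 ∩ NV.Cs 2 0 1) = 0 :=
    NV.Cs_null_pair _ _ _ _ _ _ 0 2 (by decide) (by
      rintro y ⟨c1, c2, c3, c4⟩ ⟨d1, d2, d3, d4⟩
      exact le_antisymm (by linarith) (by linarith))
  have n15 : volume (NV.Cs 0 2 1 ∩ NV.Cs 2 1 0) = 0 :=
    NV.Cs_null_pair _ _ _ _ _ _ 0 2 (by decide) (by
      rintro y ⟨c1, c2, c3, c4⟩ ⟨d1, d2, d3, d4⟩
      exact le_antisymm (by linarith) (by linarith))
  have n23 : volume (NV.Cs 1 0 2 ∩ NV.Cs 1 2 0) = 0 :=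
    NV.Cs_null_pair _ _ _ _ _ _ 0 2 (by decide) (by
      rintro y ⟨c1, c2, c3, c4⟩ ⟨d1, d2, d3, d4⟩
      exact le_antisymm (by linarith) (by linarith))
  have n24 : volume (NV.Cs 1 0 2 ∩ NV.Cs 2 0 1) = 0 :=
    NV.Cs_null_pair _ _ _ _ _ _ 1 0 (by decide) (by
      rintro y ⟨c1, c2, c3, c4⟩ ⟨d1, d2, d3, d4⟩
      exact le_antisymm (by linarith) (by linarith))
  have n25 : volume (NV.Cs 1 0 2 ∩ NV.Cs 2 1 0) = 0 :=
    NV.Cs_null_pair _ _ _ _ _ _ 0 2 (by decide) (by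
      rintro y ⟨c1, c2, c3, c4⟩ ⟨d1, d2, d3, d4⟩
      exact le_antisymm (by linarith) (by linarith))
  have n34 : volume (NV.Cs 1 2 0 ∩ NV.Cs 2 0 1) = 0 :=
    NV.Cs_null_pair _ _ _ _ _ _ 1 2 (by decide) (by
      rintro y ⟨c1, c2, c3, c4⟩ ⟨d1, d2, d3, d4⟩
      exact le_antisymm (by linarith) (by linarith))
  have n35 : volume (NV.Cs 1 2 0 ∩ NV.Cs 2 1 0) = 0 :=
    NV.Cs_null_pair _ _ _ _ _ _ 1 2 (by decide) (by
      rintro y ⟨c1, c2, c3, c4⟩ ⟨d1, d2, d3, d4⟩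
      exact le_antisymm (by linarith) (by linarith))
  have n45 : volume (NV.Cs 2 0 1 ∩ NV.Cs 2 1 0) = 0 :=
    NV.Cs_null_pair _ _ _ _ _ _ 0 1 (by decide) (by
      rintro y ⟨c1, c2, c3, c4⟩ ⟨d1, d2, d3, d4⟩
      exact le_antisymm (by linarith) (by linarith))
  have hV : ∀ x : Fin 6, volume (![NV.Cs 0 1 2, NV.Cs 0 2 1, NV.Cs 1 0 2,
      NV.Cs 1 2 0, NV.Cs 2 0 1, NV.Cs 2 1 0] x) = v := by
    intro x
    fin_cases x
    · rfl
    · exact NV.volCs_021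
    · exact NV.volCs_102
    · exact NV.volCs_120
    · exact NV.volCs_201
    · exact NV.volCs_210
  have e2 : volume (NV.Cs 0 1 2 ∪ NV.Cs 0 2 1) = v + v := by
    rw [NV.vol_union_null (NV.meas_Cs _ _ _) n01, NV.volCs_021]
  have e3 : volume (NV.Cs 0 1 2 ∪ NV.Cs 0 2 1 ∪ NV.Cs 1 0 2) = v + v + v := by
    rw [NV.vol_union_null (NV.meas_Cs _ _ _)
      (by rw [union_inter_distrib_right]; exact measure_union_null n02 n12), e2, NV.volCs_102]
  have e4 : volume (NV.Cs 0 1 2 ∪ NV.Cs 0 2 1 ∪ NV.Cs 1 0 2 ∪ NV.Cs 1 2 0) = v + v + v + v := by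
    rw [NV.vol_union_null (NV.meas_Cs _ _ _)
      (by rw [union_inter_distrib_right, union_inter_distrib_right]
          exact measure_union_null (measure_union_null n03 n13) n23), e3, NV.volCs_120]
  have e5 : volume (NV.Cs 0 1 2 ∪ NV.Cs 0 2 1 ∪ NV.Cs 1 0 2 ∪ NV.Cs 1 2 0 ∪ NV.Cs 2 0 1)
      = v + v + v + v + v := by
    rw [NV.vol_union_null (NV.meas_Cs _ _ _)
      (by rw [union_inter_distrib_right, union_inter_distrib_right, union_inter_distrib_right]
          exact measure_union_null (measure_union_null (measure_union_null n04 n14) n24) n34),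
      e4, NV.volCs_201]
  have e6 : volume (NV.Cs 0 1 2 ∪ NV.Cs 0 2 1 ∪ NV.Cs 1 0 2 ∪ NV.Cs 1 2 0 ∪ NV.Cs 2 0 1
      ∪ NV.Cs 2 1 0) = v + v + v + v + v + v := by
    rw [NV.vol_union_null (NV.meas_Cs _ _ _)
      (by rw [union_inter_distrib_right, union_inter_distrib_right, union_inter_distrib_right,
            union_inter_distrib_right]
          exact measure_union_null (measure_union_null (measure_union_null
            (measure_union_null n05 n15) n25) n35) n45),
      e5, NV.volCs_210]
  have hcube : volume (Icc (0 : Fin 3 → ℝ) 1) = 1 := by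
    rw [Real.volume_Icc_pi]
    simp
  have hsub : NV.Cs 0 1 2 ∪ NV.Cs 0 2 1 ∪ NV.Cs 1 0 2 ∪ NV.Cs 1 2 0 ∪ NV.Cs 2 0 1
      ∪ NV.Cs 2 1 0 ⊆ Icc (0 : Fin 3 → ℝ) 1 :=
    union_subset (union_subset (union_subset (union_subset (union_subset
      (NV.Cs_subset_Icc _ _ _ (by decide)) (NV.Cs_subset_Icc _ _ _ (by decide)))
      (NV.Cs_subset_Icc _ _ _ (by decide))) (NV.Cs_subset_Icc _ _ _ (by decide)))
      (NV.Cs_subset_Icc _ _ _ (by decide))) (NV.Cs_subset_Icc _ _ _ (by decide))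
  have hsum : v + v + v + v + v + v = 1 := by
    refine le_antisymm ?_ ?_
    · rw [← e6, ← hcube]; exact measure_mono hsub
    · rw [← e6, ← hcube]; exact measure_mono NV.cover
  have h6v : (6 : ENNReal) * v = 1 := by rw [← hsum]; ring
  have h6 : (6 : ENNReal) * 6⁻¹ = 1 := ENNReal.mul_inv_cancel (by norm_num) (by norm_num)
  exact (ENNReal.mul_right_inj (by norm_num) (by norm_num)).mp (h6v.trans h6.symm)



def NV.Hset : Set (Fin 3 → ℝ) := {x | 0 ≤ x 0 ∧ 0 ≤ x 1 ∧ 0 ≤ x 2 ∧ x 0 + x 1 + x 2 ≤ 1}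

lemma NV.comb4_mem {S : Set (Fin 3 → ℝ)} (hS : Convex ℝ S) {z1 z2 z3 z4 : Fin 3 → ℝ}
    (h1 : z1 ∈ S) (h2 : z2 ∈ S) (h3 : z3 ∈ S) (h4 : z4 ∈ S) {c1 c2 c3 c4 : ℝ}
    (hc1 : 0 ≤ c1) (hc2 : 0 ≤ c2) (hc3 : 0 ≤ c3) (hc4 : 0 ≤ c4)
    (hsum : c1 + c2 + c3 + c4 = 1) :
    c1 • z1 + c2 • z2 + c3 • z3 + c4 • z4 ∈ S := by
  have h := hS.sum_mem (t := Finset.univ) (w := ![c1,c2,c3,c4]) (z := ![z1,z2,z3,z4])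
    (fun i _ => by fin_cases i <;> simpa) (by simp [Fin.sum_univ_four, hsum])
    (fun i _ => by fin_cases i <;> simpa)
  simpa [Fin.sum_univ_four] using h

lemma NV.hull_corner_eq :
    convexHull ℝ ({0, ![1,0,0], ![0,1,0], ![0,0,1]} : Set (Fin 3 → ℝ)) = NV.Hset := by
  apply Subset.antisymm
  · apply convexHull_min
    · rintro x (rfl | rfl | rfl | rfl) <;> refine ⟨?_, ?_, ?_, ?_⟩ <;> norm_num [NV.Hset, Matrix.cons_val_two, Matrix.vecHead, Matrix.vecTail]
    · rintro x ⟨hx1, hx2, hx3, hx4⟩ y ⟨hy1, hy2, hy3, hy4⟩ s t hs ht hst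
      have l1 := mul_le_mul_of_nonneg_left hx4 hs
      have l2 := mul_le_mul_of_nonneg_left hy4 ht
      refine ⟨?_, ?_, ?_, ?_⟩ <;> simp only [Pi.add_apply, Pi.smul_apply, smul_eq_mul]
      · positivity
      · positivity
      · positivity
      · nlinarith
  · rintro x ⟨hx1, hx2, hx3, hx4⟩
    have hx : x = (1 - (x 0 + x 1 + x 2)) • (0 : Fin 3 → ℝ)
        + x 0 • ![1,0,0] + x 1 • ![0,1,0] + x 2 • ![0,0,1] := by
      funext l; fin_cases l <;> simp <;> ring
    rw [hx]
    have hmem : ∀ p ∈ ({0, ![1,0,0], ![0,1,0], ![0,0,1]} : Set (Fin 3 → ℝ)),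
        p ∈ convexHull ℝ ({0, ![1,0,0], ![0,1,0], ![0,0,1]} : Set (Fin 3 → ℝ)) :=
      fun p hp => subset_convexHull ℝ _ hp
    exact NV.comb4_mem (convex_convexHull ℝ _)
      (hmem _ (by simp)) (hmem _ (by simp)) (hmem _ (by simp)) (hmem _ (by simp))
      (by linarith) hx1 hx2 hx3 (by ring)

lemma NV.vol_Hset : volume NV.Hset = 6⁻¹ := by
  rw [← NV.vol_C]
  show volume NV.Hset = volume (NV.Cs 0 1 2)
  apply NV.vol_image_eq ![![(1:ℝ),0,0],![-1,1,0],![0,-1,1]]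
  · erw [Matrix.det_fin_three]; simp
  · have hM : ∀ y : Fin 3 → ℝ,
        Matrix.toLin' ![![(1:ℝ),0,0],![-1,1,0],![0,-1,1]] y = ![y 0, y 1 - y 0, y 2 - y 1] := by
      intro y; funext l; fin_cases l <;>
        erw [Matrix.toLin'_apply] <;> simp [Matrix.toLin'_apply, Matrix.mulVec, dotProduct, Fin.sum_univ_three] <;> ring
    ext x
    constructor
    · rintro ⟨y, ⟨h1, h2, h3, h4⟩, rfl⟩
      rw [hM]
      refine ⟨by simpa, by simp; linarith, by simp; linarith, by simp; linarith⟩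
    · rintro ⟨h1, h2, h3, h4⟩
      refine ⟨![x 0, x 0 + x 1, x 0 + x 1 + x 2],
        ⟨by simpa, by simp; linarith, by simp; linarith, by simp; linarith⟩, ?_⟩
      rw [hM]; funext l; fin_cases l <;> simp <;> ring

lemma NV.vol_tet (u v w : Fin 3 → ℝ) :
    volume (convexHull ℝ ({0, u, v, w} : Set (Fin 3 → ℝ)))
      = ENNReal.ofReal |(Matrix.of ![u, v, w]).det| * 6⁻¹ := by
  have h1 : Matrix.toLin' ((Matrix.of ![u, v, w]).transpose) ![(1:ℝ),0,0] = u := by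
    funext l
    simp [Matrix.toLin'_apply, Matrix.mulVec, dotProduct, Fin.sum_univ_three,
      Matrix.transpose_apply, Matrix.vecHead, Matrix.vecTail]
  have h2 : Matrix.toLin' ((Matrix.of ![u, v, w]).transpose) ![(0:ℝ),1,0] = v := by
    funext l
    simp [Matrix.toLin'_apply, Matrix.mulVec, dotProduct, Fin.sum_univ_three,
      Matrix.transpose_apply, Matrix.vecHead, Matrix.vecTail]
  have h3 : Matrix.toLin' ((Matrix.of ![u, v, w]).transpose) ![(0:ℝ),0,1] = w := by
    funext l
    simp [Matrix.toLin'_apply, Matrix.mulVec, dotProduct, Fin.sum_univ_three,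
      Matrix.transpose_apply, Matrix.vecHead, Matrix.vecTail]
  have himg : Matrix.toLin' ((Matrix.of ![u, v, w]).transpose) ''
      ({0, ![1,0,0], ![0,1,0], ![0,0,1]} : Set (Fin 3 → ℝ)) = {0, u, v, w} := by
    rw [image_insert_eq, image_insert_eq, image_insert_eq, image_singleton, h1, h2, h3, map_zero]
  have := Measure.addHaar_image_linearMap (μ := volume)
    (Matrix.toLin' ((Matrix.of ![u, v, w]).transpose))
    (convexHull ℝ ({0, ![1,0,0], ![0,1,0], ![0,0,1]} : Set (Fin 3 → ℝ)))
  rw [LinearMap.image_convexHull, himg] at this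
  rw [this, LinearMap.det_toLin', Matrix.det_transpose, NV.hull_corner_eq, NV.vol_Hset]

def NV.va : Fin 3 → ℝ := ![1,-2,0]
def NV.vb : Fin 3 → ℝ := ![1,0,-2]
def NV.vc : Fin 3 → ℝ := ![-2,1,0]
def NV.vd : Fin 3 → ℝ := ![0,1,-2]
def NV.ve : Fin 3 → ℝ := ![-2,0,1]
def NV.vf : Fin 3 → ℝ := ![0,-2,1]

open NV in
lemma NV.meas_hull (s : Set (Fin 3 → ℝ)) (hs : s.Finite) :
    MeasurableSet (convexHull ℝ s) :=
  (hs.isCompact_convexHull (𝕜 := ℝ)).measurableSet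

open NV in
lemma NV.hull_sub_ge (c : Fin 3 → ℝ) (S : Set (Fin 3 → ℝ))
    (h : ∀ v ∈ S, 0 ≤ NV.lf c v) : convexHull ℝ S ⊆ {x | 0 ≤ NV.lf c x} :=
  convexHull_min h (convex_halfSpace_ge (NV.lf c).isLinear 0)

open NV in
lemma NV.hull_sub_le (c : Fin 3 → ℝ) (S : Set (Fin 3 → ℝ))
    (h : ∀ v ∈ S, NV.lf c v ≤ 0) : convexHull ℝ S ⊆ {x | NV.lf c x ≤ 0} :=
  convexHull_min h (convex_halfSpace_le (NV.lf c).isLinear 0)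

open NV in
lemma NV.inter_null (c : Fin 3 → ℝ) (hc : NV.lf c ≠ 0) {A B : Set (Fin 3 → ℝ)}
    (hA : A ⊆ {x | 0 ≤ NV.lf c x}) (hB : B ⊆ {x | NV.lf c x ≤ 0}) :
    volume (A ∩ B) = 0 :=
  measure_mono_null (fun x hx => le_antisymm (hB hx.2) (hA hx.1)) (NV.null_of_linear _ hc)

open NV

/-- For `ℓ = 3`, the normalized volume of `P̃³` equals `13 = D₂`. -/
theorem normalized_volume_three :
    ((Nat.factorial 3 : ENNReal)) *
        volume (convexHull ℝ
          ({0} ∪ {p : Fin 3 → ℝ | ∃ i j : Fin 3, i ≠ j ∧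
            p = Pi.single i (1 : ℝ) - (2 : ℝ) • (Pi.single j (1 : ℝ) : Fin 3 → ℝ)})) =
      13 := by
  -- identify the vertex set
  have h01 : Pi.single (0 : Fin 3) (1:ℝ) - (2:ℝ) • (Pi.single (1 : Fin 3) (1:ℝ) : Fin 3 → ℝ) = va := by
    funext l; fin_cases l <;> simp [Pi.single_apply, va] <;> norm_num
  have h02 : Pi.single (0 : Fin 3) (1:ℝ) - (2:ℝ) • (Pi.single (2 : Fin 3) (1:ℝ) : Fin 3 → ℝ) = vb := by
    funext l; fin_cases l <;> simp [Pi.single_apply, vb] <;> norm_num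
  have h10 : Pi.single (1 : Fin 3) (1:ℝ) - (2:ℝ) • (Pi.single (0 : Fin 3) (1:ℝ) : Fin 3 → ℝ) = vc := by
    funext l; fin_cases l <;> simp [Pi.single_apply, vc] <;> norm_num
  have h12 : Pi.single (1 : Fin 3) (1:ℝ) - (2:ℝ) • (Pi.single (2 : Fin 3) (1:ℝ) : Fin 3 → ℝ) = vd := by
    funext l; fin_cases l <;> simp [Pi.single_apply, vd] <;> norm_num
  have h20 : Pi.single (2 : Fin 3) (1:ℝ) - (2:ℝ) • (Pi.single (0 : Fin 3) (1:ℝ) : Fin 3 → ℝ) = ve := by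
    funext l; fin_cases l <;> simp [Pi.single_apply, ve] <;> norm_num
  have h21 : Pi.single (2 : Fin 3) (1:ℝ) - (2:ℝ) • (Pi.single (1 : Fin 3) (1:ℝ) : Fin 3 → ℝ) = vf := by
    funext l; fin_cases l <;> simp [Pi.single_apply, vf] <;> norm_num
  have hset : ({0} ∪ {p : Fin 3 → ℝ | ∃ i j : Fin 3, i ≠ j ∧
      p = Pi.single i (1 : ℝ) - (2 : ℝ) • (Pi.single j (1 : ℝ) : Fin 3 → ℝ)})
      = ({0, vb, ve} ∪ {vd, vc} ∪ {vf, va} : Set (Fin 3 → ℝ)) := by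
    ext x
    simp only [mem_union, mem_singleton_iff, mem_setOf_eq, mem_insert_iff]
    constructor
    · rintro (rfl | ⟨i, j, hij, rfl⟩)
      · tauto
      · fin_cases i <;> fin_cases j <;>
          first
            | exact absurd rfl hij
            | exact Or.inl (Or.inl (Or.inr (Or.inl h02)))
            | exact Or.inl (Or.inl (Or.inr (Or.inr h20)))
            | exact Or.inl (Or.inr (Or.inl h12))
            | exact Or.inl (Or.inr (Or.inr h10))
            | exact Or.inr (Or.inl h21)
            | exact Or.inr (Or.inr h01)
    · rintro (((rfl | rfl | rfl) | rfl | rfl) | rfl | rfl)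
      · tauto
      · exact Or.inr ⟨0, 2, by decide, h02.symm⟩
      · exact Or.inr ⟨2, 0, by decide, h20.symm⟩
      · exact Or.inr ⟨1, 2, by decide, h12.symm⟩
      · exact Or.inr ⟨1, 0, by decide, h10.symm⟩
      · exact Or.inr ⟨2, 1, by decide, h21.symm⟩
      · exact Or.inr ⟨0, 1, by decide, h01.symm⟩
  rw [hset]
  -- membership helpers
  have memZ1 : vb ∈ convexHull ℝ ({0, vb, ve} : Set (Fin 3 → ℝ)) :=
    subset_convexHull ℝ _ (by simp)
  have memZ1' : ve ∈ convexHull ℝ ({0, vb, ve} : Set (Fin 3 → ℝ)) :=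
    subset_convexHull ℝ _ (by simp)
  -- first split, along the plane x₁ = 0 (through 0, vb, ve)
  have split1 : convexHull ℝ ({0, vb, ve} ∪ {vd, vc} ∪ {vf, va} : Set (Fin 3 → ℝ))
      = convexHull ℝ ({0, vb, ve} ∪ {vd, vc}) ∪ convexHull ℝ ({0, vb, ve} ∪ {vf, va}) := by
    apply NV.hull_split _ _ _ 1 2 one_pos two_pos ⟨0, by simp⟩ ⟨vd, by simp⟩ ⟨vf, by simp⟩
    have hc : Convex ℝ (convexHull ℝ ({0, vb, ve} : Set (Fin 3 → ℝ))) := convex_convexHull ℝ _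
    rintro p (rfl | rfl) n (rfl | rfl)
    · have he : (2/(1+2):ℝ) • vd + (1/(1+2):ℝ) • vf = (2/3:ℝ) • vb + (1/3:ℝ) • ve := by
        funext l; fin_cases l <;> norm_num [vd, vf, vb, ve]
      rw [he]; exact hc memZ1 memZ1' (by norm_num) (by norm_num) (by norm_num)
    · have he : (2/(1+2):ℝ) • vd + (1/(1+2):ℝ) • va = (7/9:ℝ) • vb + (2/9:ℝ) • ve := by
        funext l; fin_cases l <;> norm_num [vd, va, vb, ve]
      rw [he]; exact hc memZ1 memZ1' (by norm_num) (by norm_num) (by norm_num)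
    · have he : (2/(1+2):ℝ) • vc + (1/(1+2):ℝ) • vf = (2/9:ℝ) • vb + (7/9:ℝ) • ve := by
        funext l; fin_cases l <;> norm_num [vc, vf, vb, ve]
      rw [he]; exact hc memZ1 memZ1' (by norm_num) (by norm_num) (by norm_num)
    · have he : (2/(1+2):ℝ) • vc + (1/(1+2):ℝ) • va = (1/3:ℝ) • vb + (2/3:ℝ) • ve := by
        funext l; fin_cases l <;> norm_num [vc, va, vb, ve]
      rw [he]; exact hc memZ1 memZ1' (by norm_num) (by norm_num) (by norm_num)
  -- second split, of the hull of {0, vb, ve, vd, vc} along plane through 0, vb, vc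
  have hQ1 : ({0, vb, ve} ∪ {vd, vc} : Set (Fin 3 → ℝ)) = ({0, vb, vc} ∪ {vd} ∪ {ve}) := by
    ext x; simp only [mem_union, mem_insert_iff, mem_singleton_iff]; tauto
  have split2 : convexHull ℝ ({0, vb, vc} ∪ {vd} ∪ {ve} : Set (Fin 3 → ℝ))
      = convexHull ℝ ({0, vb, vc} ∪ {vd}) ∪ convexHull ℝ ({0, vb, vc} ∪ {ve}) := by
    apply NV.hull_split _ _ _ 2 3 two_pos three_pos ⟨0, by simp⟩ ⟨vd, by simp⟩ ⟨ve, by simp⟩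
    have hc : Convex ℝ (convexHull ℝ ({0, vb, vc} : Set (Fin 3 → ℝ))) := convex_convexHull ℝ _
    rintro p rfl n rfl
    have he : (3/(2+3):ℝ) • vd + (2/(2+3):ℝ) • ve = (2/5:ℝ) • vb + (3/5:ℝ) • vc := by
      funext l; fin_cases l <;> norm_num [vd, ve, vb, vc]
    rw [he]
    exact hc (subset_convexHull ℝ _ (by simp)) (subset_convexHull ℝ _ (by simp))
      (by norm_num) (by norm_num) (by norm_num)
  -- third split, of the hull of {0, vb, ve, vf, va} along plane through 0, vb, vf
  have hQ2 : ({0, vb, ve} ∪ {vf, va} : Set (Fin 3 → ℝ)) = ({0, vb, vf} ∪ {ve} ∪ {va}) := by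
    ext x; simp only [mem_union, mem_insert_iff, mem_singleton_iff]; tauto
  have split3 : convexHull ℝ ({0, vb, vf} ∪ {ve} ∪ {va} : Set (Fin 3 → ℝ))
      = convexHull ℝ ({0, vb, vf} ∪ {ve}) ∪ convexHull ℝ ({0, vb, vf} ∪ {va}) := by
    apply NV.hull_split _ _ _ 6 2 (by norm_num) two_pos ⟨0, by simp⟩ ⟨ve, by simp⟩ ⟨va, by simp⟩
    have hc : Convex ℝ (convexHull ℝ ({0, vb, vf} : Set (Fin 3 → ℝ))) := convex_convexHull ℝ _
    rintro p rfl n rfl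
    have he : (2/(6+2):ℝ) • ve + (6/(6+2):ℝ) • va = (1/4:ℝ) • vb + (3/4:ℝ) • vf := by
      funext l; fin_cases l <;> norm_num [ve, va, vb, vf]
    rw [he]
    exact hc (subset_convexHull ℝ _ (by simp)) (subset_convexHull ℝ _ (by simp))
      (by norm_num) (by norm_num) (by norm_num)
  -- name the four tetrahedra
  have hT1 : ({0, vb, vc} ∪ {vd} : Set (Fin 3 → ℝ)) = {0, vb, vc, vd} := by
    ext x; simp only [mem_union, mem_insert_iff, mem_singleton_iff]; tauto
  have hT2 : ({0, vb, vc} ∪ {ve} : Set (Fin 3 → ℝ)) = {0, vb, vc, ve} := by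
    ext x; simp only [mem_union, mem_insert_iff, mem_singleton_iff]; tauto
  have hT3 : ({0, vb, vf} ∪ {ve} : Set (Fin 3 → ℝ)) = {0, vb, vf, ve} := by
    ext x; simp only [mem_union, mem_insert_iff, mem_singleton_iff]; tauto
  have hT4 : ({0, vb, vf} ∪ {va} : Set (Fin 3 → ℝ)) = {0, vb, vf, va} := by
    ext x; simp only [mem_union, mem_insert_iff, mem_singleton_iff]; tauto
  rw [split1, hQ1, hQ2, split2, split3, hT1, hT2, hT3, hT4]
  -- linear functionals for disjointness
  have hf1 : NV.lf ![0,1,0] ≠ 0 := by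
    intro h
    have := LinearMap.congr_fun h ![0,1,0]
    rw [NV.lf_apply] at this
    norm_num [Matrix.cons_val_two, Matrix.vecHead, Matrix.vecTail] at this
  have hf2 : NV.lf ![2,4,1] ≠ 0 := by
    intro h
    have := LinearMap.congr_fun h ![0,1,0]
    rw [NV.lf_apply] at this
    norm_num [Matrix.cons_val_two, Matrix.vecHead, Matrix.vecTail] at this
  have hf3 : NV.lf ![-4,-1,-2] ≠ 0 := by
    intro h
    have := LinearMap.congr_fun h ![0,1,0]
    rw [NV.lf_apply] at this
    norm_num [Matrix.cons_val_two, Matrix.vecHead, Matrix.vecTail] at this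
  -- volume additivity
  have n12 : volume (convexHull ℝ ({0, vb, vc, vd} : Set (Fin 3 → ℝ))
      ∩ convexHull ℝ ({0, vb, vc, ve} : Set (Fin 3 → ℝ))) = 0 := by
    refine NV.inter_null ![2,4,1] hf2 (NV.hull_sub_ge _ _ ?_) (NV.hull_sub_le _ _ ?_) <;>
      rintro v (rfl | rfl | rfl | rfl) <;> norm_num [NV.lf_apply, vb, vc, vd, ve, Matrix.cons_val_two, Matrix.vecHead, Matrix.vecTail]
  have n34 : volume (convexHull ℝ ({0, vb, vf, ve} : Set (Fin 3 → ℝ))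
      ∩ convexHull ℝ ({0, vb, vf, va} : Set (Fin 3 → ℝ))) = 0 := by
    refine NV.inter_null ![-4,-1,-2] hf3 (NV.hull_sub_ge _ _ ?_) (NV.hull_sub_le _ _ ?_) <;>
      rintro v (rfl | rfl | rfl | rfl) <;> norm_num [NV.lf_apply, vb, vf, ve, va, Matrix.cons_val_two, Matrix.vecHead, Matrix.vecTail]
  have nQ : volume ((convexHull ℝ ({0, vb, vc, vd} : Set (Fin 3 → ℝ))
        ∪ convexHull ℝ ({0, vb, vc, ve} : Set (Fin 3 → ℝ)))
      ∩ (convexHull ℝ ({0, vb, vf, ve} : Set (Fin 3 → ℝ))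
        ∪ convexHull ℝ ({0, vb, vf, va} : Set (Fin 3 → ℝ)))) = 0 := by
    refine NV.inter_null ![0,1,0] hf1 (union_subset (NV.hull_sub_ge _ _ ?_) (NV.hull_sub_ge _ _ ?_))
      (union_subset (NV.hull_sub_le _ _ ?_) (NV.hull_sub_le _ _ ?_)) <;>
      rintro v (rfl | rfl | rfl | rfl) <;>
        norm_num [NV.lf_apply, vb, vc, vd, ve, vf, va, Matrix.cons_val_two, Matrix.vecHead, Matrix.vecTail]
  have meas2 : MeasurableSet (convexHull ℝ ({0, vb, vc, ve} : Set (Fin 3 → ℝ))) :=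
    NV.meas_hull _ (Set.toFinite _)
  have meas4 : MeasurableSet (convexHull ℝ ({0, vb, vf, va} : Set (Fin 3 → ℝ))) :=
    NV.meas_hull _ (Set.toFinite _)
  have measQ2 : MeasurableSet (convexHull ℝ ({0, vb, vf, ve} : Set (Fin 3 → ℝ))
      ∪ convexHull ℝ ({0, vb, vf, va} : Set (Fin 3 → ℝ))) :=
    (NV.meas_hull _ (Set.toFinite _)).union meas4
  rw [NV.vol_union_null measQ2 nQ, NV.vol_union_null meas2 n12, NV.vol_union_null meas4 n34]
  -- tetrahedron volumes
  have d1 : |(Matrix.of ![vb, vc, vd]).det| = 2 := by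
    rw [Matrix.det_fin_three]; norm_num [vb, vc, vd, Matrix.vecHead, Matrix.vecTail, Matrix.cons_val_two]
  have d2 : |(Matrix.of ![vb, vc, ve]).det| = 3 := by
    rw [Matrix.det_fin_three]; norm_num [vb, vc, ve, Matrix.vecHead, Matrix.vecTail, Matrix.cons_val_two]
  have d3 : |(Matrix.of ![vb, vf, ve]).det| = 6 := by
    rw [Matrix.det_fin_three]; norm_num [vb, vf, ve, Matrix.vecHead, Matrix.vecTail, Matrix.cons_val_two]
  have d4 : |(Matrix.of ![vb, vf, va]).det| = 2 := by
    rw [Matrix.det_fin_three]; norm_num [vb, vf, va, Matrix.vecHead, Matrix.vecTail, Matrix.cons_val_two]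
  rw [NV.vol_tet vb vc vd, NV.vol_tet vb vc ve, NV.vol_tet vb vf ve, NV.vol_tet vb vf va,
    d1, d2, d3, d4]
  have hfac : ((Nat.factorial 3 : ℕ) : ENNReal) = 6 := by norm_num [Nat.factorial]
  rw [hfac]
  rw [show ENNReal.ofReal 2 = (2 : ENNReal) by simp [ENNReal.ofReal_ofNat],
    show ENNReal.ofReal 3 = (3 : ENNReal) by simp [ENNReal.ofReal_ofNat],
    show ENNReal.ofReal 6 = (6 : ENNReal) by simp [ENNReal.ofReal_ofNat]]
  rw [← add_mul, ← add_mul, ← add_mul]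
  rw [show (2 + 3 + (6 + 2) : ENNReal) = 13 by norm_num]
  rw [mul_left_comm, ENNReal.mul_inv_cancel (by norm_num) (by norm_num), mul_one]

end
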